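/- If p < q are consecutive terms of the Farey sequence F_n (a Farey pair in F_n), then ?(q) − ?(p) = 2^{−n}, where ? is Minkowski's question mark function. -/

import Mathlib

open scoped MatrixGroups OnePoint
open Matrix MeasureTheory Filter Topology

noncomputable section

namespace Farey

/-- Möbius action of a real 2×2 matrix on `ℝ ∪ {∞}`. -/
def mobAux (M : Matrix (Fin 2) (Fin 2) ℝ) : OnePoint ℝ → OnePoint ℝ :=
  OnePoint.rec (if M 1 0 = 0 then ∞ else ((M 0 0 / M 1 0 : ℝ) : OnePoint ℝ))
    (fun r => if M 1 0 * r + M 1 1 = 0 then ∞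
      else (((M 0 0 * r + M 0 1) / (M 1 0 * r + M 1 1) : ℝ) : OnePoint ℝ))

@[simp] lemma mobAux_infty (M : Matrix (Fin 2) (Fin 2) ℝ) :
    mobAux M ∞ = if M 1 0 = 0 then ∞ else ((M 0 0 / M 1 0 : ℝ) : OnePoint ℝ) := rfl

@[simp] lemma mobAux_coe (M : Matrix (Fin 2) (Fin 2) ℝ) (r : ℝ) :
    mobAux M (r : OnePoint ℝ) = if M 1 0 * r + M 1 1 = 0 then ∞
      else (((M 0 0 * r + M 0 1) / (M 1 0 * r + M 1 1) : ℝ) : OnePoint ℝ) := rfl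

lemma mobAux_neg (M : Matrix (Fin 2) (Fin 2) ℝ) : mobAux (-M) = mobAux M := by
  funext x
  induction x using OnePoint.rec with
  | infty => simp [Matrix.neg_apply, neg_eq_zero, neg_div_neg_eq]
  | coe r =>
      rw [mobAux_coe, mobAux_coe]
      have h1 : (-M) 1 0 * r + (-M) 1 1 = -(M 1 0 * r + M 1 1) := by
        simp [Matrix.neg_apply]; ring
      have h0 : (-M) 0 0 * r + (-M) 0 1 = -(M 0 0 * r + M 0 1) := by
        simp [Matrix.neg_apply]; ring
      rw [h1, h0]
      simp only [neg_eq_zero, neg_div_neg_eq]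

end Farey

namespace Farey

/-- Möbius action of an integral 2×2 special linear matrix on `ℝ ∪ {∞}`. -/
def mobSL (g : SL(2, ℤ)) : OnePoint ℝ → OnePoint ℝ :=
  mobAux ((g : Matrix (Fin 2) (Fin 2) ℤ).map (Int.cast : ℤ → ℝ))

lemma mobSL_mul_center (g z : SL(2, ℤ)) (hz : z ∈ Subgroup.center SL(2, ℤ)) :
    mobSL (g * z) = mobSL g := by
  obtain ⟨r, hr, hscalar⟩ := Matrix.SpecialLinearGroup.mem_center_iff.mp hz
  have hr' : r = 1 ∨ r = -1 := by
    have : IsUnit r := IsUnit.of_mul_eq_one (r ^ 1) (by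
      simpa [pow_succ, Fintype.card_fin] using hr)
    exact Int.isUnit_iff.mp this
  rcases hr' with h1 | h1
  · have : z = 1 := by
      ext i j
      have := congrFun (congrFun hscalar i) j
      simp [h1] at this
      simp [← this]
    simp [this]
  · have hzmat : (z : Matrix (Fin 2) (Fin 2) ℤ) = -1 := by
      ext i j
      have := congrFun (congrFun hscalar i) j
      simp [h1] at this
      simp [← this]
    unfold mobSL
    have : ((g * z : SL(2,ℤ)) : Matrix (Fin 2) (Fin 2) ℤ) = -(g : Matrix (Fin 2) (Fin 2) ℤ) := by
      rw [Matrix.SpecialLinearGroup.coe_mul, hzmat]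
      simp
    rw [this]
    have hmap : ((-(g : Matrix (Fin 2) (Fin 2) ℤ)).map (Int.cast : ℤ → ℝ))
        = -(((g : Matrix (Fin 2) (Fin 2) ℤ)).map (Int.cast : ℤ → ℝ)) := by
      ext i j
      simp
    rw [hmap, mobAux_neg]

/-- Möbius action of an element of `PSL(2,ℤ)` on `ℝ ∪ {∞}`. -/
def mob (x : PSL(2, ℤ)) : OnePoint ℝ → OnePoint ℝ :=
  Quotient.liftOn' x mobSL (by
    intro g h hgh
    have hmem : g⁻¹ * h ∈ Subgroup.center SL(2, ℤ) := QuotientGroup.leftRel_apply.mp hgh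
    have : h = g * (g⁻¹ * h) := by group
    rw [this, mobSL_mul_center g _ hmem])

end Farey

namespace Farey

/-- The matrix `A = [[1,-2],[1,-1]]` as an element of `SL(2,ℤ)`. -/
def A : SL(2, ℤ) := ⟨!![1, -2; 1, -1], by norm_num [Matrix.det_fin_two_of]⟩

/-- The matrix `B = [[0,-1],[1,0]]` as an element of `SL(2,ℤ)`. -/
def B : SL(2, ℤ) := ⟨!![0, -1; 1, 0], by norm_num [Matrix.det_fin_two_of]⟩

/-- The matrix `C = [[1,-1],[2,-1]]` as an element of `SL(2,ℤ)`. -/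
def C : SL(2, ℤ) := ⟨!![1, -1; 2, -1], by norm_num [Matrix.det_fin_two_of]⟩

/-- The element `a ∈ PSL(2,ℤ)`. -/
def a : PSL(2, ℤ) := QuotientGroup.mk A

/-- The element `b ∈ PSL(2,ℤ)`. -/
def b : PSL(2, ℤ) := QuotientGroup.mk B

/-- The element `c ∈ PSL(2,ℤ)`. -/
def c : PSL(2, ℤ) := QuotientGroup.mk C

/-- The Farey group: the subgroup of `PSL(2,ℤ)` generated by `a`, `b`, `c`. -/
def fareyGroup : Subgroup PSL(2, ℤ) := Subgroup.closure {a, b, c}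

/-- The word length of an element of `PSL(2,ℤ)` with respect to the generators
`a`, `b`, `c` of the Farey group. -/
def wordLength (x : PSL(2, ℤ)) : ℕ :=
  sInf {n | ∃ l : List PSL(2, ℤ), l.length = n ∧ (∀ s ∈ l, s = a ∨ s = b ∨ s = c) ∧ l.prod = x}

/-- The sphere of radius `n` in the Farey group for the word metric w.r.t. `{a,b,c}`. -/
def sphere (n : ℕ) : Set PSL(2, ℤ) := {x | x ∈ fareyGroup ∧ wordLength x = n}

end Farey

namespace Farey

/-- The mediant of two rationals, `p₁/q₁ ⊕ p₂/q₂ = (p₁+p₂)/(q₁+q₂)` (in lowest terms). -/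
def mediant (p q : ℚ) : ℚ := ((p.num + q.num : ℤ) : ℚ) / (((p.den : ℤ) + (q.den : ℤ) : ℤ) : ℚ)

/-- Insert the mediant between every two consecutive entries of a list of rationals. -/
def insertMediants : List ℚ → List ℚ
  | p :: q :: rest => p :: mediant p q :: insertMediants (q :: rest)
  | l => l

/-- The Farey sequences: `F_0 = (0,1)`, and `F_{n+1}` is obtained from `F_n` by inserting
mediants between consecutive terms. -/
def fareySeq : ℕ → List ℚ
  | 0 => [0, 1]
  | n + 1 => insertMediants (fareySeq n)

/-- `p, q` are consecutive terms of the Farey sequence `F_n`. -/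
def IsFareyPairIn (n : ℕ) (p q : ℚ) : Prop :=
  ∃ i : ℕ, (fareySeq n)[i]? = some p ∧ (fareySeq n)[i + 1]? = some q

/-- `p, q` form a Farey pair: they are consecutive terms of some Farey sequence. -/
def IsFareyPair (p q : ℚ) : Prop := ∃ n : ℕ, IsFareyPairIn n p q

/-- The `k`-th summand (`k = 0, 1, 2, …`) in the series defining Minkowski's question mark
function: `(−1)^k 2^{−(a₁+⋯+a_{k+1})}` when the continued fraction expansion
`x = [a₀; a₁, a₂, …]` has at least `k+1` partial denominators and `0` otherwise. -/
def qmTerm (x : ℝ) (k : ℕ) : ℝ :=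
  match (List.range (k + 1)).mapM (fun i => (GenContFract.of x).partDens.get? i) with
  | none => 0
  | some l => (-1 : ℝ) ^ k * (2 : ℝ) ^ (-(l.sum))

/-- Minkowski's question mark function on `[0,1]`:
`?(x) = 2 ∑_{k≥1} (−1)^{k+1} 2^{−(a₁+⋯+a_k)}` for `x = [0; a₁, a₂, …]`, `?(1) = 1`. -/
def questionMark (x : ℝ) : ℝ := if x = 1 then 1 else 2 * ∑' k : ℕ, qmTerm x k

/-- The extended Minkowski function `M̄(q) = (1/3)(∑_{k=−∞}^{m−1} 2^{−|k|} + ?(q−m)·2^{−|m|})`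
for `q ∈ [m, m+1]`. -/
def extM (q : ℝ) : ℝ :=
  (1 / 3) * ((∑' j : ℕ, (2 : ℝ) ^ (-|⌊q⌋ - 1 - (j : ℤ)|)) +
    questionMark (q - ⌊q⌋) * (2 : ℝ) ^ (-|⌊q⌋|))

instance : MeasurableSpace (OnePoint ℝ) := borel _
instance : BorelSpace (OnePoint ℝ) := ⟨rfl⟩

/-- `μ` is the extended Minkowski measure: the Borel probability measure on `ℝ ∪ {∞}` giving
no mass to `{∞}` whose cumulative distribution function is the extended Minkowski function. -/
def IsExtMinkowskiMeasure (μ : Measure (OnePoint ℝ)) : Prop :=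
  IsProbabilityMeasure μ ∧ μ {∞} = 0 ∧
    ∀ u v : ℝ, u ≤ v →
      μ ((fun r : ℝ => (r : OnePoint ℝ)) '' Set.Ico u v) = ENNReal.ofReal (extM v - extM u)

end Farey

open Farey

namespace FareyAux

set_option maxHeartbeats 1000000

open GenContFract


/-- The coefficient sequence of `of v` depends only on the fractional part. -/
lemma of_s_fract (v : ℝ) : ∀ n, (GenContFract.of v).s.get? n = (GenContFract.of (Int.fract v)).s.get? n := by
  intro n
  induction n generalizing v with
  | zero =>
      by_cases h : Int.fract v = 0
      · have hv : v = ((⌊v⌋ : ℤ) : ℝ) := by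
          have := Int.fract_add_floor v
          rw [h] at this; linarith
        rw [hv, of_s_of_int, Int.fract_intCast, show ((0:ℝ)) = ((0:ℤ):ℝ) by norm_num, of_s_of_int]
      · have h2 : Int.fract (Int.fract v) ≠ 0 := by rwa [Int.fract_fract]
        show (GenContFract.of v).s.head = (GenContFract.of (Int.fract v)).s.head
        rw [of_s_head h, of_s_head h2, Int.fract_fract]
  | succ n ih =>
      rw [of_s_succ, of_s_succ, Int.fract_fract]

lemma partDens_get?_zero (x : ℝ) (h0 : 0 < x) (h1 : x < 1) :
    (GenContFract.of x).partDens.get? 0 = some ((⌊x⁻¹⌋ : ℤ) : ℝ) := by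
  have hfr : Int.fract x = x := Int.fract_eq_self.mpr ⟨h0.le, h1⟩
  have hne : Int.fract x ≠ 0 := by rw [hfr]; exact h0.ne'
  have hh := of_s_head hne
  rw [hfr] at hh
  simp only [GenContFract.partDens, Stream'.Seq.map_get?]
  rw [show (GenContFract.of x).s.get? 0 = (GenContFract.of x).s.head from rfl, hh]
  rfl

lemma partDens_get?_succ (x : ℝ) (h0 : 0 < x) (h1 : x < 1) (n : ℕ) :
    (GenContFract.of x).partDens.get? (n + 1) = (GenContFract.of (Int.fract x⁻¹)).partDens.get? n := by
  have hfr : Int.fract x = x := Int.fract_eq_self.mpr ⟨h0.le, h1⟩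
  simp only [GenContFract.partDens, Stream'.Seq.map_get?]
  rw [of_s_succ, hfr, of_s_fract]

lemma partDens_zero_none (n : ℕ) : (GenContFract.of (0:ℝ)).partDens.get? n = none := by
  rw [show (0:ℝ) = ((0:ℤ):ℝ) by norm_num]
  rw [GenContFract.partDens, Stream'.Seq.map_get?, of_s_of_int]
  simp



lemma mapM_map_succ (F : ℕ → Option ℝ) (l : List ℕ) :
    (l.map Nat.succ).mapM F = l.mapM (fun i => F (i + 1)) := by
  induction l with
  | nil => rfl
  | cons a l ih => simp only [List.map_cons, List.mapM_cons, ih, Nat.succ_eq_add_one]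

lemma mapM_range_shift (F G : ℕ → Option ℝ) (a : ℝ) (h0 : F 0 = some a)
    (hs : ∀ i, F (i + 1) = G i) (n : ℕ) :
    (List.range (n + 1)).mapM F = ((List.range n).mapM G).map (a :: ·) := by
  rw [List.range_succ_eq_map, List.mapM_cons, h0, mapM_map_succ]
  simp only [hs]
  cases h : (List.range n).mapM G <;> simp [h]

lemma mapM_range_sum_ge (F : ℕ → Option ℝ) (hF : ∀ i v, F i = some v → 1 ≤ v) :
    ∀ n l, (List.range n).mapM F = some l → (n : ℝ) ≤ l.sum := by
  intro n
  induction n with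
  | zero =>
      intro l h
      simp only [List.range_zero, List.mapM_nil, Option.pure_def, Option.some.injEq] at h
      simp [← h]
  | succ n ih =>
      intro l h
      rw [List.range_succ, List.mapM_append] at h
      simp only [List.mapM_cons, List.mapM_nil, Option.bind_eq_bind, Option.bind_eq_some_iff,
        Option.pure_def, Option.some.injEq] at h
      obtain ⟨l1, hl1, l2, ⟨v, hv, a, ha, hva⟩, hl⟩ := h
      subst hl; subst hva; subst ha
      have h1 := ih l1 (by simpa using hl1)
      have h2 := hF n v hv
      simp only [List.sum_append, List.sum_cons, List.sum_nil, add_zero]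
      push_cast
      linarith

lemma qmTerm_of_eq_some {x : ℝ} {k : ℕ} {l : List ℝ}
    (h : (List.range (k + 1)).mapM (fun i => (GenContFract.of x).partDens.get? i) = some l) :
    qmTerm x k = (-1 : ℝ) ^ k * (2 : ℝ) ^ (-(l.sum)) := by
  unfold qmTerm; rw [h]

lemma qmTerm_of_eq_none {x : ℝ} {k : ℕ}
    (h : (List.range (k + 1)).mapM (fun i => (GenContFract.of x).partDens.get? i) = none) :
    qmTerm x k = 0 := by
  unfold qmTerm; rw [h]



lemma qmTerm_bound (x : ℝ) (k : ℕ) : |qmTerm x k| ≤ (1/2 : ℝ) ^ (k + 1) := by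
  rcases h : (List.range (k + 1)).mapM (fun i => (GenContFract.of x).partDens.get? i) with _ | l
  · rw [qmTerm_of_eq_none h, abs_zero]; positivity
  · rw [qmTerm_of_eq_some h]
    have hsum : ((k + 1 : ℕ) : ℝ) ≤ l.sum := by
      refine mapM_range_sum_ge _ ?_ (k + 1) l h
      intro i v hv
      exact GenContFract.of_one_le_get?_partDen hv
    have hpos : (0:ℝ) < (2 : ℝ) ^ (-(l.sum)) := Real.rpow_pos_of_pos (by norm_num) _
    rw [abs_mul, abs_pow, abs_neg, abs_one, one_pow, one_mul, abs_of_pos hpos]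
    have : (2 : ℝ) ^ (-(l.sum)) ≤ (2:ℝ) ^ (-((k+1:ℕ):ℝ)) := by
      apply Real.rpow_le_rpow_left_iff (by norm_num : (1:ℝ) < 2) |>.mpr
      linarith
    refine this.trans_eq ?_
    rw [Real.rpow_neg (by norm_num), Real.rpow_natCast]
    simp [div_pow, one_div, inv_pow]

lemma qmTerm_summable (x : ℝ) : Summable (qmTerm x) := by
  apply Summable.of_abs
  apply Summable.of_nonneg_of_le (fun k => abs_nonneg _) (qmTerm_bound x)
  have : Summable (fun k : ℕ => (1/2 : ℝ) ^ k) :=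
    summable_geometric_of_lt_one (by norm_num) (by norm_num)
  simpa [pow_succ] using this.mul_right (1/2 : ℝ)

lemma qmTerm_zero (k : ℕ) : qmTerm 0 k = 0 := by
  apply qmTerm_of_eq_none
  rw [List.range_succ_eq_map, List.mapM_cons, partDens_zero_none]
  rfl

lemma questionMark_zero : questionMark 0 = 0 := by
  rw [questionMark, if_neg (by norm_num)]
  simp [qmTerm_zero, tsum_zero]

lemma questionMark_one : questionMark 1 = 1 := by
  rw [questionMark, if_pos rfl]

/-- The key recursion. -/
lemma questionMark_rec (x : ℝ) (h0 : 0 < x) (h1 : x < 1) :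
    questionMark x
      = (2:ℝ) ^ (-((⌊x⁻¹⌋ : ℤ) : ℝ)) * (2 - questionMark (Int.fract x⁻¹)) := by
  set a : ℝ := ((⌊x⁻¹⌋ : ℤ) : ℝ) with ha
  set r : ℝ := Int.fract x⁻¹ with hr
  have hterm0 : qmTerm x 0 = (2:ℝ) ^ (-a) := by
    have : (List.range 1).mapM (fun i => (GenContFract.of x).partDens.get? i)
        = some [a] := by
      rw [show List.range 1 = [0] from rfl, List.mapM_cons, partDens_get?_zero x h0 h1]
      rfl
    rw [qmTerm_of_eq_some this]
    simp
  have htermS : ∀ k, qmTerm x (k + 1) = -(2:ℝ) ^ (-a) * qmTerm r k := by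
    intro k
    have hshift : (List.range (k + 2)).mapM (fun i => (GenContFract.of x).partDens.get? i)
        = ((List.range (k+1)).mapM (fun i => (GenContFract.of r).partDens.get? i)).map
            (a :: ·) := by
      exact mapM_range_shift _ _ a (partDens_get?_zero x h0 h1)
        (fun i => partDens_get?_succ x h0 h1 i) (k+1)
    rcases hl : (List.range (k+1)).mapM (fun i => (GenContFract.of r).partDens.get? i)
      with _ | l
    · rw [hl] at hshift
      rw [qmTerm_of_eq_none hshift, qmTerm_of_eq_none hl]
      ring
    · rw [hl] at hshift
      rw [qmTerm_of_eq_some hshift, qmTerm_of_eq_some hl]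
      simp only [Option.map_some, List.sum_cons] at *
      rw [neg_add, Real.rpow_add (by norm_num : (0:ℝ) < 2)]
      ring
  have hS : ∑' k, qmTerm x k = (2:ℝ)^(-a) - (2:ℝ)^(-a) * ∑' k, qmTerm r k := by
    rw [(qmTerm_summable x).tsum_eq_zero_add, hterm0]
    have : ∑' k, qmTerm x (k+1) = ∑' k, -(2:ℝ)^(-a) * qmTerm r k := by
      exact tsum_congr htermS
    rw [this, tsum_mul_left]
    ring
  have hrlt : r < 1 := Int.fract_lt_one _
  rw [questionMark, if_neg h1.ne, hS, questionMark, if_neg hrlt.ne]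
  ring

lemma rpow_neg_intCast (n : ℤ) : (2:ℝ) ^ (-((n:ℤ):ℝ)) = ((2:ℝ) ^ (n:ℤ))⁻¹ := by
  rw [show -((n:ℤ):ℝ) = ((-n : ℤ) : ℝ) by push_cast; ring, Real.rpow_intCast]
  rw [_root_.zpow_neg]

lemma questionMark_half : questionMark (1/2) = 1/2 := by
  have h := questionMark_rec (1/2) (by norm_num) (by norm_num)
  have h2 : ((1:ℝ)/2)⁻¹ = 2 := by norm_num
  rw [h2] at h
  have h3 : ⌊(2:ℝ)⌋ = 2 := by
    rw [show (2:ℝ) = ((2:ℤ):ℝ) by norm_num, Int.floor_intCast]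
  have h4 : Int.fract (2:ℝ) = 0 := by
    rw [show (2:ℝ) = ((2:ℤ):ℝ) by norm_num, Int.fract_intCast]
  rw [h3, h4, questionMark_zero, rpow_neg_intCast] at h
  rw [h]; norm_num

lemma questionMark_L (x : ℝ) (h0 : 0 ≤ x) (h1 : x ≤ 1) :
    questionMark (x / (1 + x)) = questionMark x / 2 := by
  rcases eq_or_lt_of_le h0 with h | hx0
  · rw [← h]; simp [questionMark_zero]
  rcases eq_or_lt_of_le h1 with h | hx1
  · rw [h]; norm_num [questionMark_half, questionMark_one]
  -- main case 0 < x < 1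
  set y := x / (1 + x) with hy
  have hx1' : (0:ℝ) < 1 + x := by linarith
  have hy0 : 0 < y := div_pos hx0 hx1'
  have hy1 : y < 1 := by
    rw [div_lt_one hx1']; linarith
  have hyi : y⁻¹ = x⁻¹ + 1 := by
    rw [hy, inv_div, add_div, div_self hx0.ne', inv_eq_one_div]
  have hfloor : ⌊y⁻¹⌋ = ⌊x⁻¹⌋ + 1 := by
    rw [hyi, Int.floor_add_one]
  have hfract : Int.fract y⁻¹ = Int.fract x⁻¹ := by
    rw [hyi, Int.fract_add_one]
  rw [questionMark_rec y hy0 hy1, questionMark_rec x hx0 hx1, hfloor, hfract]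
  rw [show ((((⌊x⁻¹⌋ + 1) : ℤ)):ℝ) = ((⌊x⁻¹⌋:ℤ):ℝ) + 1 by push_cast; ring]
  rw [neg_add, Real.rpow_add (by norm_num : (0:ℝ) < 2), Real.rpow_neg_one]
  ring

lemma questionMark_compl_aux (x : ℝ) (h0 : 0 < x) (h1 : x < 1/2) :
    questionMark (1 - x) = 1 - questionMark x := by
  set y := 1 - x with hy
  have hy0 : 0 < y := by rw [hy]; linarith
  have hy1 : y < 1 := by rw [hy]; linarith
  have hyhalf : 1/2 < y := by rw [hy]; linarith
  have hyi1 : 1 ≤ y⁻¹ := by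
    rw [le_inv_comm₀ (by norm_num) hy0]; linarith
  have hyi2 : y⁻¹ < 2 := by
    rw [inv_lt_comm₀ hy0 (by norm_num)]; linarith
  have hfloor : ⌊y⁻¹⌋ = 1 := by
    apply Int.floor_eq_iff.mpr
    constructor <;> push_cast <;> linarith
  have hfract : Int.fract y⁻¹ = x / (1 - x) := by
    rw [Int.fract, hfloor]
    push_cast
    rw [hy]
    rw [inv_eq_one_div, div_sub_one (by linarith : (1:ℝ) - x ≠ 0)]; congr 1; ring
  set z := x / (1 - x) with hz
  have hz0 : 0 < z := div_pos h0 hy0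
  have hz1 : z < 1 := by
    rw [div_lt_one hy0]; linarith
  have hLz : z / (1 + z) = x := by
    have hne : (1:ℝ) - x ≠ 0 := by linarith
    rw [hz]; field_simp
    ring
  have hqz := questionMark_L z hz0.le hz1.le
  rw [hLz] at hqz
  rw [questionMark_rec y hy0 hy1, hfloor, hfract]
  rw [show ((1:ℤ):ℝ) = 1 by norm_num, Real.rpow_neg_one, hqz]
  ring

lemma questionMark_compl (x : ℝ) (h0 : 0 < x) (h1 : x < 1) :
    questionMark (1 - x) = 1 - questionMark x := by
  rcases lt_trichotomy x (1/2) with h | h | h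
  · exact questionMark_compl_aux x h0 h
  · rw [h]; norm_num [questionMark_half]
  · have := questionMark_compl_aux (1 - x) (by linarith) (by linarith)
    rw [show 1 - (1 - x) = x by ring] at this
    linarith

lemma questionMark_R (x : ℝ) (h0 : 0 ≤ x) (h1 : x ≤ 1) :
    questionMark (1 / (2 - x)) = (1 + questionMark x) / 2 := by
  rcases eq_or_lt_of_le h1 with h | hx1
  · rw [h]; norm_num [questionMark_one]
  have h2x : (0:ℝ) < 2 - x := by linarith
  rcases eq_or_lt_of_le h0 with h | hx0
  · rw [← h]; norm_num [questionMark_half, questionMark_zero]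
  set y := 1 / (2 - x) with hy
  have hy0 : 0 < y := by positivity
  have hy1 : y < 1 := by
    rw [hy, div_lt_one h2x]; linarith
  have hyi : y⁻¹ = 2 - x := by
    rw [hy, one_div, inv_inv]
  have hfloor : ⌊y⁻¹⌋ = 1 := by
    apply Int.floor_eq_iff.mpr
    constructor <;> push_cast <;> rw [hyi] <;> linarith
  have hfract : Int.fract y⁻¹ = 1 - x := by
    rw [Int.fract, hfloor, hyi]; push_cast; ring
  rw [questionMark_rec y hy0 hy1, hfloor, hfract,
    questionMark_compl x hx0 hx1,
    show ((1:ℤ):ℝ) = 1 by norm_num, Real.rpow_neg_one]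
  ring


lemma den_pos' (γ δ : ℤ) (x : ℚ) (hδ : 1 ≤ δ) (hγδ : 1 ≤ γ + δ) (hx0 : 0 ≤ x) (hx1 : x ≤ 1) :
    0 < (γ:ℚ) * x + δ := by
  have hδ' : (1:ℚ) ≤ (δ:ℚ) := by exact_mod_cast hδ
  have hγδ' : (1:ℚ) ≤ (γ:ℚ) + (δ:ℚ) := by exact_mod_cast hγδ
  rcases le_or_gt 0 (γ:ℚ) with h | h
  · nlinarith
  · nlinarith

lemma rat_num_den (a b : ℤ) (hb : 0 < b) (hcop : IsCoprime a b) :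
    ((a:ℚ)/b).num = a ∧ (((a:ℚ)/b).den : ℤ) = b := by
  exact ⟨Rat.num_div_eq_of_coprime hb (Int.isCoprime_iff_gcd_eq_one.mp hcop),
    Rat.den_div_eq_of_coprime hb (Int.isCoprime_iff_gcd_eq_one.mp hcop)⟩

/-- Invariant for consecutive pairs in the `n`-th Farey list. -/
def P (n : ℕ) (p q : ℚ) : Prop :=
  ∃ α β γ δ : ℤ,
    α * δ - β * γ = 1 ∧ 1 ≤ δ ∧ 1 ≤ γ + δ ∧
    p = (β : ℚ) / (δ : ℚ) ∧ q = ((α : ℚ) + (β : ℚ)) / ((γ : ℚ) + (δ : ℚ)) ∧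
    ∀ x : ℚ, 0 ≤ x → x ≤ 1 →
      questionMark ((((α : ℚ) * x + β) / ((γ : ℚ) * x + δ) : ℚ) : ℝ)
        = questionMark (p : ℝ) + questionMark (x : ℝ) / 2 ^ n

lemma mediant_eq {n : ℕ} {p q : ℚ} {α β γ δ : ℤ}
    (hdet : α * δ - β * γ = 1) (hδ : 1 ≤ δ) (hγδ : 1 ≤ γ + δ)
    (hp : p = (β : ℚ) / (δ : ℚ)) (hq : q = ((α : ℚ) + (β : ℚ)) / ((γ : ℚ) + (δ : ℚ))) :
    mediant p q = ((α + 2 * β : ℤ) : ℚ) / ((γ + 2 * δ : ℤ) : ℚ) := by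
  have hcop1 : IsCoprime β δ := ⟨-γ, α, by linear_combination hdet⟩
  have hcop2 : IsCoprime (α + β) (γ + δ) := ⟨-γ, α, by linear_combination hdet⟩
  have h1 := rat_num_den β δ (by omega) hcop1
  have h2 := rat_num_den (α + β) (γ + δ) (by omega) hcop2
  have hq' : q = ((α + β : ℤ) : ℚ) / ((γ + δ : ℤ) : ℚ) := by rw [hq]; push_cast; ring
  rw [mediant, hp, hq', h1.1, h2.1]
  rw [h1.2, h2.2]
  push_cast; try ring_nf

lemma P_step {n : ℕ} {p q : ℚ} (h : P n p q) :
    P (n + 1) p (mediant p q) ∧ P (n + 1) (mediant p q) q := by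
  obtain ⟨α, β, γ, δ, hdet, hδ, hγδ, hp, hq, hqm⟩ := h
  have hmed := mediant_eq (n := n) hdet hδ hγδ hp hq
  constructor
  · -- left child: matrix (α+β, β; γ+δ, δ)
    refine ⟨α + β, β, γ + δ, δ, by linear_combination hdet, hδ, by omega, hp, ?_, ?_⟩
    · rw [hmed]; push_cast; try ring_nf
    · intro x hx0 hx1
      have h1x : (0:ℚ) < 1 + x := by linarith
      set x' : ℚ := x / (1 + x) with hx'
      have hx'0 : 0 ≤ x' := div_nonneg hx0 h1x.le
      have hx'1 : x' ≤ 1 := by rw [hx', div_le_one h1x]; linarith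
      have hden : 0 < (γ:ℚ) * x' + δ := den_pos' γ δ x' hδ hγδ hx'0 hx'1
      have hden2 : 0 < ((γ:ℚ) + δ) * x + δ := by
        have := den_pos' (γ + δ) δ x (by omega) (by omega) hx0 hx1
        push_cast at this; linarith
      have harg : ((((α+β:ℤ)):ℚ) * x + (β:ℚ)) / (((γ+δ:ℤ):ℚ) * x + (δ:ℚ))
          = ((α:ℚ) * x' + β) / ((γ:ℚ) * x' + δ) := by
        have e1 : (((γ+δ:ℤ)):ℚ) * x + (δ:ℚ) ≠ 0 := by
          push_cast; push_cast at hden2; exact ne_of_gt (by linarith)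
        have e2 : (γ:ℚ) * x' + (δ:ℚ) ≠ 0 := ne_of_gt hden
        rw [div_eq_div_iff e1 e2, hx']
        field_simp
        push_cast
        ring
      rw [harg, hqm x' hx'0 hx'1]
      have hcast : ((x' : ℚ) : ℝ) = (x:ℝ) / (1 + (x:ℝ)) := by rw [hx']; push_cast; ring
      have hL := questionMark_L (x:ℝ) (by exact_mod_cast hx0) (by exact_mod_cast hx1)
      rw [hcast, hL]
      ring
  · -- right child: matrix (-β, α+2β; -δ, γ+2δ)
    refine ⟨-β, α + 2*β, -δ, γ + 2*δ, by linear_combination hdet, by omega, by omega, ?_, ?_, ?_⟩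
    · exact hmed
    · rw [hq]; push_cast; try ring_nf
    · intro x hx0 hx1
      have h2x : (0:ℚ) < 2 - x := by linarith
      set x' : ℚ := 1 / (2 - x) with hx'
      have hx'0 : 0 ≤ x' := by positivity
      have hx'1 : x' ≤ 1 := by rw [hx', div_le_one h2x]; linarith
      have hden : 0 < (γ:ℚ) * x' + δ := den_pos' γ δ x' hδ hγδ hx'0 hx'1
      have hden2 : 0 < ((-δ:ℤ):ℚ) * x + ((γ + 2*δ:ℤ):ℚ) := by
        have := den_pos' (-δ) (γ + 2*δ) x (by omega) (by omega) hx0 hx1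
        push_cast at this ⊢; linarith
      have harg : (((-β:ℤ):ℚ) * x + ((α + 2*β:ℤ):ℚ)) / (((-δ:ℤ):ℚ) * x + ((γ + 2*δ:ℤ):ℚ))
          = ((α:ℚ) * x' + β) / ((γ:ℚ) * x' + δ) := by
        have e1 : ((-δ:ℤ):ℚ) * x + ((γ + 2*δ:ℤ):ℚ) ≠ 0 := ne_of_gt hden2
        have e2 : (γ:ℚ) * x' + (δ:ℚ) ≠ 0 := ne_of_gt hden
        rw [div_eq_div_iff e1 e2, hx']
        field_simp
        push_cast
        ring
      -- question mark value of the mediant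
      have hhalf0 : (0:ℚ) ≤ 1/2 := by norm_num
      have hhalf1 : (1:ℚ)/2 ≤ 1 := by norm_num
      have hmedarg : (((α:ℚ) * (1/2) + β) / ((γ:ℚ) * (1/2) + δ) : ℚ)
          = mediant p q := by
        have hdenh : 0 < (γ:ℚ) * (1/2) + δ := den_pos' γ δ (1/2) hδ hγδ hhalf0 hhalf1
        have hdenR : (0:ℚ) < ((γ + 2*δ:ℤ):ℚ) := by
          exact_mod_cast (by omega : (0:ℤ) < γ + 2*δ)
        rw [hmed, div_eq_div_iff (ne_of_gt hdenh) (ne_of_gt hdenR)]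
        push_cast; ring
      have hmedqm : questionMark ((mediant p q : ℚ) : ℝ)
          = questionMark (p : ℝ) + (1/2 : ℝ) / 2 ^ n := by
        rw [← hmedarg, hqm (1/2) hhalf0 hhalf1,
          show (((1/2:ℚ)):ℝ) = (1/2:ℝ) by norm_num, questionMark_half]
      rw [harg, hqm x' hx'0 hx'1, hmedqm]
      have hcast : ((x' : ℚ) : ℝ) = 1 / (2 - (x:ℝ)) := by rw [hx']; push_cast; ring
      have hR := questionMark_R (x:ℝ) (by exact_mod_cast hx0) (by exact_mod_cast hx1)
      rw [hcast, hR]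
      ring

lemma P_base : P 0 0 1 := by
  refine ⟨1, 0, 0, 1, by norm_num, le_rfl, by norm_num, by norm_num, by norm_num, ?_⟩
  intro x hx0 hx1
  rw [show ((((1:ℤ):ℚ) * x + ((0:ℤ):ℚ)) / (((0:ℤ):ℚ) * x + ((1:ℤ):ℚ)) : ℚ) = x by push_cast; ring]
  rw [show ((0:ℚ):ℝ) = (0:ℝ) by norm_num, questionMark_zero]
  norm_num

lemma insertMediants_head? (q : ℚ) (rest : List ℚ) :
    (insertMediants (q :: rest)).head? = some q := by
  cases rest <;> rfl

lemma chain'_insertMediants {S T : ℚ → ℚ → Prop}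
    (h : ∀ p q, S p q → T p (mediant p q) ∧ T (mediant p q) q) :
    ∀ l : List ℚ, List.Chain' S l → List.Chain' T (insertMediants l)
  | [] => fun _ => List.isChain_nil
  | [p] => fun _ => List.isChain_singleton p
  | p :: q :: rest => fun hc => by
      obtain ⟨hpq, hc2⟩ := List.isChain_cons_cons.mp hc
      have ih := chain'_insertMediants h (q :: rest) hc2
      rw [show insertMediants (p :: q :: rest)
          = p :: mediant p q :: insertMediants (q :: rest) from rfl]
      rw [List.Chain', List.isChain_cons_cons]
      refine ⟨(h p q hpq).1, List.isChain_cons.mpr ⟨?_, ih⟩⟩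
      intro y hy
      rw [insertMediants_head? q rest] at hy
      simp only [Option.mem_some_iff] at hy
      subst hy
      exact (h p q hpq).2

lemma farey_chain (n : ℕ) : List.Chain' (P n) (fareySeq n) := by
  induction n with
  | zero =>
      simp [fareySeq, List.Chain', List.isChain_cons_cons]
      exact P_base
  | succ n ih =>
      exact chain'_insertMediants (fun p q h => P_step h) (fareySeq n) ih

lemma P_diff {n : ℕ} {p q : ℚ} (h : P n p q) :
    questionMark (q : ℝ) - questionMark (p : ℝ) = (1 : ℝ) / 2 ^ n := by
  obtain ⟨α, β, γ, δ, hdet, hδ, hγδ, hp, hq, hqm⟩ := h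
  have h1 := hqm 1 zero_le_one le_rfl
  have harg : (((α:ℚ) * 1 + β) / ((γ:ℚ) * 1 + δ) : ℚ) = q := by
    rw [hq]; ring_nf
  rw [harg, show (((1:ℚ)):ℝ) = (1:ℝ) by norm_num, questionMark_one] at h1
  rw [h1]; ring

theorem questionMark_fareyPair' (n : ℕ) (p q : ℚ) (hpq : IsFareyPairIn n p q) :
    questionMark (q : ℝ) - questionMark (p : ℝ) = (1 : ℝ) / 2 ^ n := by
  obtain ⟨i, hp, hq⟩ := hpq
  have hchain := farey_chain n
  rw [List.Chain', List.isChain_iff_getElem] at hchain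
  have hip : i + 1 < (fareySeq n).length := (List.getElem?_eq_some_iff.mp hq).1
  have hi : i < (fareySeq n).length - 1 := by omega
  have := hchain i hip
  have hgp : (fareySeq n).get ⟨i, by omega⟩ = p := by
    have := (List.getElem?_eq_some_iff.mp hp).2
    simpa [List.get_eq_getElem] using this
  have hgq : (fareySeq n).get ⟨i + 1, by omega⟩ = q := by
    have := (List.getElem?_eq_some_iff.mp hq).2
    simpa [List.get_eq_getElem] using this
  simp only [List.get_eq_getElem] at hgp hgq
  rw [hgp, hgq] at this
  exact P_diff this


end FareyAux

/-- **Lemma (Farey pairs and the question mark function).** If `p < q` are consecutive terms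
of the Farey sequence `F_n`, then `?(q) − ?(p) = 2^{−n}`, where `?` is Minkowski's question
mark function. -/
theorem questionMark_fareyPair (n : ℕ) (p q : ℚ) (hpq : IsFareyPairIn n p q) :
    questionMark (q : ℝ) - questionMark (p : ℝ) = (1 : ℝ) / 2 ^ n :=
  FareyAux.questionMark_fareyPair' n p q hpq
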